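/- For all n, r ≥ 0, the r-Bell numbers satisfy B_{n,r} = Σ_{i=0}^{n} r^i · C(n,i) · B_{n−i}, where B_{n,r} = Σ_{k=0}^{n} S_r(n,k) is the sum of r-Stirling numbers of the second kind and B_n = B_{n,0} is the ordinary Bell number. -/
import Mathlib

open Finset

/-- The r-Stirling numbers of the second kind `S_r(n,k)`. -/
def rStirling2 (r : ℕ) : ℕ → ℕ → ℕ
  | 0, 0 => 1
  | 0, _ + 1 => 0
  | n + 1, 0 => r * rStirling2 r n 0
  | n + 1, k + 1 => rStirling2 r n k + (k + 1 + r) * rStirling2 r n (k + 1)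

/-- The r-Bell numbers `B_{n,r}`. -/
def rBell (n r : ℕ) : ℕ := ∑ k ∈ range (n + 1), rStirling2 r n k

lemma rStirling2_col0 (r : ℕ) : ∀ m, rStirling2 r m 0 = r ^ m := by
  intro m
  induction m with
  | zero => rfl
  | succ m ih => simp [rStirling2, ih, pow_succ, mul_comm]

lemma rStirling2_zero_of_lt : ∀ n k : ℕ, n < k → rStirling2 0 n k = 0 := by
  intro n
  induction n with
  | zero =>
    intro k h
    match k, h with
    | k + 1, _ => rfl
  | succ n ih =>
    intro k h
    match k, h with
    | k + 1, h =>
      simp only [rStirling2]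
      rw [ih k (by omega), ih (k + 1) (by omega)]
      ring

lemma rStirling2_key (r : ℕ) : ∀ n k, rStirling2 r n k =
    ∑ i ∈ range (n + 1), n.choose i * r ^ i * rStirling2 0 (n - i) k := by
  intro n
  induction n with
  | zero => intro k; cases k <;> simp [rStirling2]
  | succ n ih =>
    intro k
    cases k with
    | zero =>
      rw [rStirling2_col0]
      have : ∀ i ∈ range (n + 2), (n + 1).choose i * r ^ i * rStirling2 0 (n + 1 - i) 0
          = r ^ i * 0 ^ (n + 1 - i) * (n + 1).choose i := by
        intro i _
        rw [rStirling2_col0]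
        ring
      have h := add_pow r 0 (n + 1)
      simp only [Nat.cast_id, add_zero] at h
      rw [Finset.sum_congr rfl this, ← h]
    | succ k =>
      have hS : ∀ m j, rStirling2 0 (m + 1) (j + 1)
          = rStirling2 0 m j + (j + 1) * rStirling2 0 m (j + 1) := by
        intro m j; simp [rStirling2]
      -- abbreviations
      set P := ∑ i ∈ range (n + 1), n.choose i * r ^ i * rStirling2 0 (n - i) k with hP
      set Q := ∑ i ∈ range (n + 1), n.choose i * r ^ i * rStirling2 0 (n - i) (k + 1) with hQ
      have hLHS : rStirling2 r (n + 1) (k + 1) = P + (k + 1 + r) * Q := by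
        simp only [rStirling2]; rw [ih k, ih (k + 1)]
      rw [hLHS]
      -- the "R1" sum
      have hR1 : ∑ i ∈ range (n + 1), n.choose i * r ^ i * rStirling2 0 (n + 1 - i) (k + 1)
          = P + (k + 1) * Q := by
        have : ∀ i ∈ range (n + 1), n.choose i * r ^ i * rStirling2 0 (n + 1 - i) (k + 1)
            = n.choose i * r ^ i * rStirling2 0 (n - i) k
              + (k + 1) * (n.choose i * r ^ i * rStirling2 0 (n - i) (k + 1)) := by
          intro i hi
          have hi' : i ≤ n := by simpa [Nat.lt_succ_iff] using hi
          have : n + 1 - i = (n - i) + 1 := by omega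
          rw [this, hS]; ring
        rw [Finset.sum_congr rfl this, Finset.sum_add_distrib, ← Finset.mul_sum]
      -- the same sum, peeled at i = 0
      have hR2 : ∑ i ∈ range (n + 1), n.choose i * r ^ i * rStirling2 0 (n + 1 - i) (k + 1)
          = (∑ i ∈ range n, n.choose (i + 1) * r ^ (i + 1) * rStirling2 0 (n - i) (k + 1))
            + rStirling2 0 (n + 1) (k + 1) := by
        rw [Finset.sum_range_succ']
        simp
      -- expand the RHS
      rw [Finset.sum_range_succ']
      have hstep : ∀ i ∈ range (n + 1),
          (n + 1).choose (i + 1) * r ^ (i + 1) * rStirling2 0 (n + 1 - (i + 1)) (k + 1)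
          = r * (n.choose i * r ^ i * rStirling2 0 (n - i) (k + 1))
            + n.choose (i + 1) * r ^ (i + 1) * rStirling2 0 (n - i) (k + 1) := by
        intro i _
        rw [Nat.succ_sub_succ, Nat.choose_succ_succ]
        ring
      rw [Finset.sum_congr rfl hstep, Finset.sum_add_distrib, ← Finset.mul_sum, ← hQ]
      have hA2 : ∑ i ∈ range (n + 1), n.choose (i + 1) * r ^ (i + 1) * rStirling2 0 (n - i) (k + 1)
          = ∑ i ∈ range n, n.choose (i + 1) * r ^ (i + 1) * rStirling2 0 (n - i) (k + 1) := by
        rw [Finset.sum_range_succ, Nat.choose_succ_self]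
        simp
      rw [hA2]
      have hfin : (∑ i ∈ range n, n.choose (i + 1) * r ^ (i + 1) * rStirling2 0 (n - i) (k + 1))
          + rStirling2 0 (n + 1) (k + 1) = P + (k + 1) * Q := by
        rw [← hR2, hR1]
      simp only [Nat.sub_zero, Nat.choose_zero_right, pow_zero, one_mul]
      rw [add_assoc (r * Q), hfin]
      ring

theorem rBell_eq_sum_bell (n r : ℕ) :
    rBell n r = ∑ i ∈ range (n + 1), r ^ i * n.choose i * rBell (n - i) 0 := by
  unfold rBell
  have h1 : ∀ k ∈ range (n + 1), rStirling2 r n k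
      = ∑ i ∈ range (n + 1), n.choose i * r ^ i * rStirling2 0 (n - i) k := fun k _ =>
    rStirling2_key r n k
  rw [Finset.sum_congr rfl h1, Finset.sum_comm]
  refine Finset.sum_congr rfl fun i hi => ?_
  rw [← Finset.mul_sum]
  have hsub : (range (n - i + 1)) ⊆ range (n + 1) := by
    apply Finset.range_subset_range.mpr; omega
  have h2 : ∑ k ∈ range (n + 1), rStirling2 0 (n - i) k
      = ∑ k ∈ range (n - i + 1), rStirling2 0 (n - i) k := by
    symm
    apply Finset.sum_subset hsub
    intro k _ hk
    apply rStirling2_zero_of_lt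
    simp only [Finset.mem_range, not_lt] at hk
    omega
  rw [h2]
  ring
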